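/- For the Tribonacci sequence and any k ≥ 3: 8·∑_{j=0}^{k} (−1)^j·T(2j)² = (−1)^k·(7·T(2k)² + 3·T(2k−1)² − 6·T(2k−2)² − T(2k−4)² + T(2k−5)²) + 2. -/

import Mathlib

open Finset

theorem stmt14 (T : ℕ → ℤ) (h0 : T 0 = 0) (h1 : T 1 = 1) (h2 : T 2 = 1) (hT : ∀ n, 3 ≤ n → T n = T (n-1) + T (n-2) + T (n-3)) :
    ∀ k, 3 ≤ k → 8*∑ j ∈ range (k+1), (-1:ℤ)^j * (T (2*j))^2 = (-1)^k * (7*(T (2*k))^2 + 3*(T (2*k-1))^2 - 6*(T (2*k-2))^2 - (T (2*k-4))^2 + (T (2*k-5))^2) + 2 := by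
  have h3 := hT 3 (by norm_num)
  have h4 := hT 4 (by norm_num)
  have h5 := hT 5 (by norm_num)
  have h6 := hT 6 (by norm_num)
  simp only [show (3:ℕ)-1=2 from rfl, show (3:ℕ)-2=1 from rfl, show (3:ℕ)-3=0 from rfl,
    show (4:ℕ)-1=3 from rfl, show (4:ℕ)-2=2 from rfl, show (4:ℕ)-3=1 from rfl,
    show (5:ℕ)-1=4 from rfl, show (5:ℕ)-2=3 from rfl, show (5:ℕ)-3=2 from rfl,
    show (6:ℕ)-1=5 from rfl, show (6:ℕ)-2=4 from rfl, show (6:ℕ)-3=3 from rfl] at h3 h4 h5 h6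
  intro k hk
  induction k, hk using Nat.le_induction with
  | base =>
    norm_num [Finset.sum_range_succ, h0, h1, h2, h3, h4, h5, h6]
  | succ k hk ih =>
    rw [Finset.sum_range_succ, mul_add, ih]
    have e3 : T (2*k-2) = T (2*k-3) + T (2*k-4) + T (2*k-5) := by
      have := hT (2*k-2) (by omega)
      rwa [show 2*k-2-1 = 2*k-3 by omega, show 2*k-2-2 = 2*k-4 by omega,
        show 2*k-2-3 = 2*k-5 by omega] at this
    have e4 : T (2*k-1) = T (2*k-2) + T (2*k-3) + T (2*k-4) := by
      have := hT (2*k-1) (by omega)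
      rwa [show 2*k-1-1 = 2*k-2 by omega, show 2*k-1-2 = 2*k-3 by omega,
        show 2*k-1-3 = 2*k-4 by omega] at this
    have e5 : T (2*k) = T (2*k-1) + T (2*k-2) + T (2*k-3) := hT (2*k) (by omega)
    have e6 : T (2*k+1) = T (2*k) + T (2*k-1) + T (2*k-2) := by
      have := hT (2*k+1) (by omega)
      rwa [show 2*k+1-1 = 2*k by omega, show 2*k+1-2 = 2*k-1 by omega,
        show 2*k+1-3 = 2*k-2 by omega] at this
    have e7 : T (2*k+2) = T (2*k+1) + T (2*k) + T (2*k-1) := by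
      have := hT (2*k+2) (by omega)
      rwa [show 2*k+2-1 = 2*k+1 by omega, show 2*k+2-2 = 2*k by omega,
        show 2*k+2-3 = 2*k-1 by omega] at this
    rw [show 2*(k+1) = 2*k+2 by ring, show 2*k+2-1 = 2*k+1 by omega,
      show 2*k+2-2 = 2*k by omega, show 2*k+2-4 = 2*k-2 by omega,
      show 2*k+2-5 = 2*k-3 by omega]
    rw [e7, e6, e5, e4, e3, pow_succ]
    ring
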